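/- The set of distances of a universal metric space satisfies the 4-values condition: if M is a universal metric space, then dist(M) satisfies the 4-values condition. -/

import Mathlib

/-- The set of distances realized in a metric space. -/
def distSet (X : Type*) [MetricSpace X] : Set ℝ :=
  {r : ℝ | ∃ x y : X, dist x y = r}

/-- A metric space is homogeneous if every isometry from a finite subset into the
space extends to a bijective self-isometry. -/
def IsHomogeneous (X : Type*) [MetricSpace X] : Prop :=
  ∀ F : Set X, F.Finite →
    ∀ f : F → X, (∀ x y : F, dist (f x) (f y) = dist (x : X) (y : X)) →
      ∃ g : X ≃ᵢ X, ∀ x : F, g (x : X) = f x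

/-- A metric space is universal if it is homogeneous and embeds isometrically every
finite metric space whose distances lie in its distance set. -/
def IsUniversal (X : Type*) [MetricSpace X] : Prop :=
  IsHomogeneous X ∧
    ∀ (F : Type) [MetricSpace F] [Finite F], distSet F ⊆ distSet X →
      ∃ f : F → X, ∀ a b : F, dist (f a) (f b) = dist a b

/-- An Urysohn metric space: homogeneous, separable, complete, and embedding every
separable metric space whose distances lie in its distance set. -/
def IsUrysohn (X : Type*) [MetricSpace X] : Prop :=
  IsHomogeneous X ∧ TopologicalSpace.SeparableSpace X ∧ CompleteSpace X ∧
    ∀ (N : Type) [MetricSpace N] [TopologicalSpace.SeparableSpace N],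
      distSet N ⊆ distSet X →
        ∃ f : N → X, ∀ a b : N, dist (f a) (f b) = dist a b

/-- The triple `(a, b, c)` of nonnegative reals is metric: `|a - b| ≤ c ≤ a + b`. -/
def MetricTriple (a b c : ℝ) : Prop := |a - b| ≤ c ∧ c ≤ a + b

/-- `x ⤳ (a, b, c, d)`: the triples `(x,a,b)` and `(x,c,d)` are metric and
`a ≥ max {b, c, d}`. -/
def Leads (x a b c d : ℝ) : Prop :=
  MetricTriple x a b ∧ MetricTriple x c d ∧ b ≤ a ∧ c ≤ a ∧ d ≤ a

/-- The 4-values condition. -/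
def FourValues (R : Set ℝ) : Prop :=
  ∀ a b c d, a ∈ R → b ∈ R → c ∈ R → d ∈ R →
    (∃ x ∈ R, Leads x a b c d) → ∃ y ∈ R, Leads y a d c b

/-- `0` is a limit point of `R ⊆ [0, ∞)`. -/
def ZeroLimit (R : Set ℝ) : Prop := ∀ ε > 0, ∃ r ∈ R, 0 < r ∧ r < ε

/-- `d` is a metric on the type `α`. -/
def IsMetricOn {α : Type*} (d : α → α → ℝ) : Prop :=
  (∀ x, d x x = 0) ∧ (∀ x y, d x y = d y x) ∧
    (∀ x y z, d x z ≤ d x y + d y z) ∧ ∀ x y, d x y = 0 → x = y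

/-- A restricted type function of the metric space `X`: a positive real valued function on a
finite subset of `X`, compatible with the metric, with values in the distance set of `X`. -/
def IsRestrictedType (X : Type*) [MetricSpace X] (F : Set X) (t : F → ℝ) : Prop :=
  F.Finite ∧ (∀ x, 0 < t x) ∧
    (∀ x y : F, |t x - t y| ≤ dist (x : X) (y : X) ∧ dist (x : X) (y : X) ≤ t x + t y) ∧
    ∀ x, t x ∈ distSet X

/-- A Katětov function of the metric space `X`: a positive real valued function on a finite
subset of `X` whose one-point extension `Sp(k)` is isometric to a subspace of `X`. -/
def IsKatetov (X : Type*) [MetricSpace X] (F : Set X) (k : F → ℝ) : Prop :=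
  F.Finite ∧ (∀ x, 0 < k x) ∧
    ∃ (g : F → X) (p : X),
      (∀ x y : F, dist (g x) (g y) = dist (x : X) (y : X)) ∧ ∀ x : F, dist p (g x) = k x

/-- `p` realizes the type function `t` in `X`. -/
def Realizes {X : Type*} [MetricSpace X] (F : Set X) (t : F → ℝ) (p : X) : Prop :=
  ∀ x : F, dist p (x : X) = t x


/-- A bespoke three-element type (with no pre-existing topology instances). -/
inductive Tri : Type
  | A | B | C
deriving DecidableEq

instance : Fintype Tri := ⟨{Tri.A, Tri.B, Tri.C}, fun x => by cases x <;> simp⟩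

noncomputable def triDist (x a b : ℝ) : Tri → Tri → ℝ
  | .A, .A => 0 | .B, .B => 0 | .C, .C => 0
  | .A, .B => x | .B, .A => x
  | .A, .C => a | .C, .A => a
  | .B, .C => b | .C, .B => b

lemma distSet_nonneg {X : Type*} [MetricSpace X] {r : ℝ} (h : r ∈ distSet X) : 0 ≤ r := by
  obtain ⟨p, q, rfl⟩ := h; exact dist_nonneg

lemma key_extension (M : Type) [MetricSpace M] (hM : IsUniversal M) (u v : M) (a b : ℝ)
    (ha : a ∈ distSet M) (hb : b ∈ distSet M)
    (h1 : dist u v ≤ a + b) (h2 : a ≤ dist u v + b) (h3 : b ≤ dist u v + a) :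
    ∃ w : M, dist w u = a ∧ dist w v = b := by
  classical
  set x : ℝ := dist u v with hxdef
  have hx : 0 ≤ x := dist_nonneg
  have ha0 : 0 ≤ a := distSet_nonneg ha
  have hb0 : 0 ≤ b := distSet_nonneg hb
  letI pm : PseudoMetricSpace Tri :=
    { dist := triDist x a b
      dist_self := fun i => by cases i <;> rfl
      dist_comm := fun i j => by cases i <;> cases j <;> rfl
      dist_triangle := fun i j k => by
        cases i <;> cases j <;> cases k <;> simp [triDist] <;> linarith }
  have hdistval : ∀ i j : Tri, dist i j = triDist x a b i j := fun _ _ => rfl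
  letI : Finite (SeparationQuotient Tri) :=
    Finite.of_surjective _ SeparationQuotient.surjective_mk
  have hsub : distSet (SeparationQuotient Tri) ⊆ distSet M := by
    rintro r ⟨p, q, rfl⟩
    obtain ⟨i, rfl⟩ := SeparationQuotient.surjective_mk p
    obtain ⟨j, rfl⟩ := SeparationQuotient.surjective_mk q
    rw [SeparationQuotient.dist_mk, hdistval]
    cases i <;> cases j <;> simp only [triDist]
    · exact ⟨u, u, dist_self u⟩
    · exact ⟨u, v, rfl⟩
    · exact ha
    · exact ⟨u, v, rfl⟩
    · exact ⟨u, u, dist_self u⟩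
    · exact hb
    · exact ha
    · exact hb
    · exact ⟨u, u, dist_self u⟩
  obtain ⟨f, hf⟩ := hM.2 (SeparationQuotient Tri) hsub
  set p0 := f (SeparationQuotient.mk .A) with hp0
  set p1 := f (SeparationQuotient.mk .B) with hp1
  set w0 := f (SeparationQuotient.mk .C) with hw0
  have d01 : dist p0 p1 = x := by
    rw [hf, SeparationQuotient.dist_mk, hdistval]; rfl
  have d20 : dist w0 p0 = a := by
    rw [hf, SeparationQuotient.dist_mk, hdistval]; rfl
  have d21 : dist w0 p1 = b := by
    rw [hf, SeparationQuotient.dist_mk, hdistval]; rfl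
  set F : Set M := {p0, p1} with hF
  set g0 : F → M := fun z => if (z : M) = p0 then u else v with hg0
  have hg0p0 : ∀ (h : p0 ∈ F), g0 ⟨p0, h⟩ = u := by intro h; simp [hg0]
  have hg0p1 : ∀ (h : p1 ∈ F) (hne : p1 ≠ p0), g0 ⟨p1, h⟩ = v := by
    intro h hne; simp [hg0, hne]
  have hiso : ∀ z w : F, dist (g0 z) (g0 w) = dist (z : M) (w : M) := by
    rintro ⟨z, hz⟩ ⟨w, hw⟩
    have hz' : z = p0 ∨ z = p1 := hz
    have hw' : w = p0 ∨ w = p1 := hw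
    by_cases hpp : p1 = p0
    · have hx0 : x = 0 := by rw [← d01, hpp, dist_self]
      have huv : u = v := by rw [← dist_eq_zero, ← hxdef, hx0]
      have hzp : z = p0 := hz'.elim id (fun h => h.trans hpp)
      have hwp : w = p0 := hw'.elim id (fun h => h.trans hpp)
      subst hzp hwp
      rw [hg0p0, dist_self, dist_self]
    · rcases hz' with rfl | rfl <;> rcases hw' with rfl | rfl
      · rw [hg0p0, dist_self, dist_self]
      · rw [hg0p0, hg0p1 hw hpp, d01]
      · rw [hg0p0, hg0p1 hz hpp, dist_comm p1 p0, d01, dist_comm v u]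
      · rw [hg0p1 hz hpp, dist_self, dist_self]
  obtain ⟨g, hg⟩ := hM.1 F (Set.toFinite _) g0 hiso
  have hgp0 : g p0 = u := by
    have := hg ⟨p0, Or.inl rfl⟩
    rwa [hg0p0 (Or.inl rfl)] at this
  refine ⟨g w0, ?_, ?_⟩
  · rw [← hgp0, g.dist_eq, d20]
  · by_cases hpp : p1 = p0
    · have hx0 : x = 0 := by rw [← d01, hpp, dist_self]
      have huv : u = v := by rw [← dist_eq_zero, ← hxdef, hx0]
      have hab : a = b := le_antisymm (by linarith) (by linarith)
      rw [← huv, ← hgp0, g.dist_eq, d20, hab]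
    · have hgp1 : g p1 = v := by
        have := hg ⟨p1, Or.inr rfl⟩
        rwa [hg0p1 (Or.inr rfl) hpp] at this
      rw [← hgp1, g.dist_eq, d21]

/-- The distance set of a universal metric space satisfies the
4-values condition. -/
theorem statement4 (M : Type) [MetricSpace M] (hM : IsUniversal M) :
    FourValues (distSet M) := by
  intro a b c d ha hb hc hd hex
  obtain ⟨x, hxR, hL⟩ := hex
  obtain ⟨⟨hab1, hab2⟩, ⟨hcd1, hcd2⟩, hba, hca, hda⟩ := hL
  rw [abs_sub_le_iff] at hab1 hcd1
  obtain ⟨u, v, huv⟩ := hxR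
  obtain ⟨w1, hw1u, hw1v⟩ :=
    key_extension M hM u v a b ha hb (by rw [huv]; linarith [hab1.1])
      (by rw [huv]; linarith [hab1.2]) (by rw [huv]; linarith [hab1.1])
  obtain ⟨w2, hw2u, hw2v⟩ :=
    key_extension M hM u v d c hd hc (by rw [huv]; linarith [hcd1.1])
      (by rw [huv]; linarith) (by rw [huv]; linarith [hcd1.2])
  refine ⟨dist w1 w2, ⟨w1, w2, rfl⟩, ?_⟩
  have hu2 : dist u w2 = d := by rw [dist_comm]; exact hw2u
  have hv2 : dist v w2 = c := by rw [dist_comm]; exact hw2v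
  have t1 : dist w1 w2 ≤ a + d := by
    have := dist_triangle w1 u w2; rwa [hw1u, hu2] at this
  have t2 : a ≤ dist w1 w2 + d := by
    have := dist_triangle w1 w2 u; rwa [hw1u, hw2u] at this
  have t3 : d ≤ dist w1 w2 + a := by
    have := dist_triangle w2 w1 u; rwa [hw2u, hw1u, dist_comm w2 w1] at this
  have t4 : dist w1 w2 ≤ b + c := by
    have := dist_triangle w1 v w2; rwa [hw1v, hv2] at this
  have t5 : c ≤ dist w1 w2 + b := by
    have := dist_triangle w2 w1 v; rwa [hw2v, hw1v, dist_comm w2 w1] at this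
  have t6 : b ≤ dist w1 w2 + c := by
    have := dist_triangle w1 w2 v; rwa [hw1v, hw2v] at this
  exact ⟨⟨abs_sub_le_iff.mpr ⟨by linarith, by linarith⟩, t3⟩,
    ⟨abs_sub_le_iff.mpr ⟨by linarith, by linarith⟩, t6⟩, hda, hca, hba⟩
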